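/- Let L be a principally generated C-lattice that is a lattice domain, let m be a maximal element of L and x a principal element with 0 < m·m ≤ x < m (i.e., m² ≤ x, x ≤ m, x ≠ m, m² ≠ 0). Then m = (x : m); in particular m is a divisorial element. -/

import Mathlib

/-- A multiplicative lattice: a complete lattice (bottom `⊥` playing the role of `0`)
which is a commutative monoid whose identity `1` is the top element, and in which
multiplication distributes over arbitrary joins. -/
class MulLattice (L : Type*) extends CompleteLattice L, CommMonoid L where
  one_eq_top : (1 : L) = ⊤
  mul_sSup : ∀ (a : L) (S : Set L), a * sSup S = ⨆ b ∈ S, a * b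

namespace MulLattice

variable {L : Type*} [MulLattice L]

/-- The residual `(y : x) = ⋁ {a | a * x ≤ y}`. -/
def res (y x : L) : L := sSup {a : L | a * x ≤ y}

/-- `x` is meet-principal: `y ⊓ z * x = ((y : x) ⊓ z) * x` for all `y, z`. -/
def IsMeetPrincipal (x : L) : Prop := ∀ y z : L, y ⊓ z * x = (res y x ⊓ z) * x

/-- `x` is join-principal: `y ⊔ (z : x) = ((y * x ⊔ z) : x)` for all `y, z`. -/
def IsJoinPrincipal (x : L) : Prop := ∀ y z : L, y ⊔ res z x = res (y * x ⊔ z) x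

/-- `x` is principal if it is both meet-principal and join-principal. -/
def IsPrincipal (x : L) : Prop := IsMeetPrincipal x ∧ IsJoinPrincipal x

/-- A prime element: a proper element `p` with `x * y ≤ p → x ≤ p ∨ y ≤ p`. -/
def IsPrime (p : L) : Prop := p ≠ 1 ∧ ∀ x y : L, x * y ≤ p → x ≤ p ∨ y ≤ p

/-- A maximal element: an element maximal in `L - {1}`. -/
def IsMaximal (m : L) : Prop := m ≠ 1 ∧ ∀ b : L, m < b → b = 1

end MulLattice

/-- The December 2024 Mathlib definition of a compact element of a complete lattice
(Mathlib has since renamed `IsCompactElement` to the root namespace and restated it via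
directed sets); kept here with its old meaning. -/
def CompleteLattice.IsCompactElement {α : Type*} [CompleteLattice α] (k : α) : Prop :=
  ∀ s : Set α, k ≤ sSup s → ∃ t : Finset α, ↑t ⊆ s ∧ k ≤ t.sup id

/-- A principally generated C-lattice: a multiplicative lattice in which `1` is compact,
compact elements are closed under multiplication, every element is a join of compact
elements and every element is a join of principal elements. -/
class PGCLattice (L : Type*) extends MulLattice L where
  top_isCompact : CompleteLattice.IsCompactElement (⊤ : L)
  compact_mul : ∀ a b : L, CompleteLattice.IsCompactElement a →
    CompleteLattice.IsCompactElement b → CompleteLattice.IsCompactElement (a * b)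
  compactly_generated : ∀ a : L,
    a = sSup {c : L | CompleteLattice.IsCompactElement c ∧ c ≤ a}
  principally_generated : ∀ a : L,
    a = sSup {x : L | MulLattice.IsPrincipal x ∧ x ≤ a}

namespace MulLattice

variable {L : Type*}

/-- A lattice domain: `0 = ⊥` is a prime element. -/
def IsLatticeDomain (L : Type*) [MulLattice L] : Prop := IsPrime (⊥ : L)

variable [PGCLattice L]

open Classical in
/-- The divisorial (`v`-)closure of `a`: equals `(x : (x : a))` for a nonzero principal
`x ≤ a` when such an `x` exists (in a lattice domain this is independent of the choice
of `x`), and `⊥` otherwise (in particular `vclos ⊥ = ⊥`). -/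
noncomputable def vclos (a : L) : L :=
  if h : ∃ x : L, IsPrincipal x ∧ x ≠ ⊥ ∧ x ≤ a then
    res h.choose (res h.choose a)
  else ⊥

/-- `a` is divisorial if `a = a_v`. -/
def IsDivisorial (a : L) : Prop := vclos a = a

/-- `L` is h-local: every nonzero prime is below a unique maximal element and
every nonzero element is below only finitely many maximal elements. -/
def IsHLocal (L : Type*) [PGCLattice L] : Prop :=
  (∀ r : L, r ≠ ⊥ → IsPrime r → ∃! m : L, IsMaximal m ∧ r ≤ m) ∧
  (∀ b : L, b ≠ ⊥ → {m : L | IsMaximal m ∧ b ≤ m}.Finite)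

end MulLattice

open MulLattice

section Aux

variable {L : Type*} [MulLattice L]

lemma my_mul_sup (a b c : L) : a * (b ⊔ c) = a * b ⊔ a * c := by
  have h := MulLattice.mul_sSup a {b, c}
  rw [sSup_pair] at h
  rw [h]
  exact iSup_pair

lemma my_mul_le_mul_left {b c : L} (a : L) (h : b ≤ c) : a * b ≤ a * c := by
  have : a * c = a * b ⊔ a * c := by rw [← my_mul_sup, sup_eq_right.mpr h]
  rw [this]; exact le_sup_left

lemma my_mul_top (a : L) : a * ⊤ = a := by
  rw [← MulLattice.one_eq_top, mul_one]

lemma my_top_mul (a : L) : ⊤ * a = a := by rw [mul_comm, my_mul_top]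

lemma res_mul_le (y x : L) : res y x * x ≤ y := by
  rw [mul_comm, res, MulLattice.mul_sSup]
  exact iSup₂_le fun a ha => by rw [mul_comm]; exact ha

lemma le_res_iff {a y x : L} : a ≤ res y x ↔ a * x ≤ y := by
  constructor
  · intro h
    calc a * x = x * a := mul_comm _ _
      _ ≤ x * res y x := my_mul_le_mul_left _ h
      _ = res y x * x := mul_comm _ _
      _ ≤ y := res_mul_le y x
  · intro h; exact le_sSup h

lemma res_res (y a b : L) : res y (a * b) = res (res y b) a := by
  have h : ∀ t : L, t ≤ res y (a * b) ↔ t ≤ res (res y b) a := by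
    intro t
    rw [le_res_iff, le_res_iff, le_res_iff, mul_assoc, mul_comm a b]
  exact le_antisymm ((h _).1 le_rfl) ((h _).2 le_rfl)

lemma res_bot_of_ne_bot (hL : IsLatticeDomain L) {c : L} (hc : c ≠ ⊥) :
    res (⊥ : L) c = ⊥ := by
  rw [res]
  refine le_bot_iff.mp (sSup_le ?_)
  intro t ht
  rcases hL.2 t c ht with h | h
  · exact h
  · exact absurd (le_bot_iff.mp h) hc

/-- cancellation: for a nonzero principal `c` in a domain, `(y*c : c) = y`. -/
lemma res_mul_self (hL : IsLatticeDomain L) {c : L} (hc : IsPrincipal c)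
    (hc0 : c ≠ ⊥) (y : L) : res (y * c) c = y := by
  have h := hc.2 y ⊥
  rw [res_bot_of_ne_bot hL hc0, sup_bot_eq, sup_bot_eq] at h
  exact h.symm

/-- for meet-principal `c`: `(y : c) * c = y ⊓ c`. -/
lemma res_mul_eq_inf {c : L} (hc : IsMeetPrincipal c) (y : L) :
    res y c * c = y ⊓ c := by
  have h := hc y ⊤
  rw [my_top_mul, inf_top_eq] at h
  exact h.symm

end Aux

section Main

variable {L : Type*} [PGCLattice L]

lemma key1 {m x : L} (hm : IsMaximal m) (h1 : m * m ≤ x) (h2 : x < m) :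
    m = res x m := by
  refine le_antisymm (le_res_iff.mpr h1) ?_
  by_contra hcon
  have hlt : m < m ⊔ res x m := lt_of_le_of_ne le_sup_left
    (fun h => hcon (sup_eq_left.mp h.symm))
  have htop : m ⊔ res x m = 1 := hm.2 _ hlt
  have : m ≤ x := by
    calc m = m * 1 := (mul_one m).symm
      _ = m * (m ⊔ res x m) := by rw [htop]
      _ = m * m ⊔ m * res x m := my_mul_sup _ _ _
      _ ≤ x := sup_le h1 (by rw [mul_comm]; exact res_mul_le x m)
  exact absurd this h2.not_ge

/-- main choice-independence step: for any nonzero principal `c ≤ m`,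
`(c : (c : m)) = m`. -/
lemma key2 (hL : IsLatticeDomain L) {m x c : L} (hm : IsMaximal m)
    (hx : IsPrincipal x) (h1 : m * m ≤ x) (h2 : x < m)
    (hc : IsPrincipal c) (hc0 : c ≠ ⊥) (hcm : c ≤ m) :
    res c (res c m) = m := by
  have hmx : m = res x m := key1 hm h1 h2
  have hge : m ≤ res c (res c m) := by
    rw [le_res_iff, mul_comm]; exact res_mul_le c m
  refine le_antisymm ?_ hge
  by_contra hcon
  have hlt : m < res c (res c m) := lt_of_le_of_ne hge (fun h => hcon h.ge)
  have htop : res c (res c m) = ⊤ := by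
    rw [hm.2 _ hlt, MulLattice.one_eq_top]
  -- (c : m) = c
  have hrcm : res c m = c := by
    refine le_antisymm ?_ (le_res_iff.mpr ((my_mul_le_mul_left c le_top).trans_eq (my_mul_top c)))
    have : (⊤ : L) * res c m ≤ c := by
      rw [← le_res_iff]; exact le_of_eq htop.symm
    rwa [my_top_mul] at this
  -- (c : x) = c
  have hrcx : res c x = c := by
    refine le_antisymm ?_ (le_res_iff.mpr ((my_mul_le_mul_left c le_top).trans_eq (my_mul_top c)))
    apply sSup_le
    intro t ht
    have htmm : t * m * m ≤ c := by
      rw [mul_assoc]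
      exact (my_mul_le_mul_left t h1).trans ht
    have : t * m ≤ c := by
      have := le_res_iff.mpr htmm
      rwa [hrcm] at this
    have := le_res_iff.mpr this
    rwa [hrcm] at this
  -- (x : c) = x
  have hxc : res x c = x := by
    refine le_antisymm ?_ (le_res_iff.mpr ((my_mul_le_mul_left x le_top).trans_eq (my_mul_top x)))
    have e1 : res x c * c = x ⊓ c := res_mul_eq_inf hc.1 x
    have e2 : res c x * x = c ⊓ x := res_mul_eq_inf hx.1 c
    have e3 : res x c * c = x * c := by
      rw [e1, inf_comm, ← e2, hrcx, mul_comm]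
    have : res x c ≤ res (x * c) c := le_res_iff.mpr (le_of_eq e3)
    rwa [res_mul_self hL hc hc0 x] at this
  -- contradiction: m = (x : (c*m)) = (m : c) = ⊤
  have hfin : m = res m c := by
    calc m = res x m := hmx
      _ = res (res x c) m := by rw [hxc]
      _ = res x (m * c) := (res_res x m c).symm
      _ = res x (c * m) := by rw [mul_comm]
      _ = res (res x m) c := res_res x c m
      _ = res m c := by rw [← hmx]
  have : (⊤ : L) ≤ res m c := le_res_iff.mpr (by rwa [my_top_mul])
  have hmtop : m = ⊤ := le_antisymm le_top (this.trans_eq hfin.symm)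
  exact hm.1 (by rw [hmtop, MulLattice.one_eq_top])

end Main

theorem stmt8 {L : Type*} [PGCLattice L] (hL : IsLatticeDomain L)
    (m x : L) (hm : IsMaximal m) (hx : IsPrincipal x)
    (h0 : m * m ≠ ⊥) (h1 : m * m ≤ x) (h2 : x < m) :
    m = res x m ∧ IsDivisorial m := by
  have hx0 : x ≠ ⊥ := fun h => h0 (le_bot_iff.mp (h ▸ h1))
  refine ⟨key1 hm h1 h2, ?_⟩
  unfold IsDivisorial vclos
  have hex : ∃ y : L, IsPrincipal y ∧ y ≠ ⊥ ∧ y ≤ m := ⟨x, hx, hx0, h2.le⟩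
  rw [dif_pos hex]
  obtain ⟨hc, hc0, hcm⟩ := hex.choose_spec
  exact key2 hL hm hx h1 h2 hc hc0 hcm
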